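/- Let s be a seaweed subalgebra of gl(N,ℂ) determined by compositions a and b of N. Then the nilradical of s decomposes as n(s) = span{E_{p,q} ∈ s : E_{q,p} ∉ s} ⊕ Z(s), where Z(s) is the center of s. In particular, n(s) is the direct sum of an abelian Lie algebra of dimension |PS(a) ∩ PS(b)| and a nilpotent Lie poset algebra. -/

import Mathlib

noncomputable section

attribute [local instance 100] LieRing.ofAssociativeRing

/-- The elementary matrix `E_{p,q}` in `gl(N,ℂ)`. -/
def Emat (N : ℕ) (p q : Fin N) : Matrix (Fin N) (Fin N) ℂ := Matrix.single p q 1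

/-- The set of partial sums `PS(c) = {c₁+⋯+c_j : 1 ≤ j ≤ r}` of a composition `c`. -/
def PS (c : List ℕ) : Set ℕ := {k | ∃ j, 1 ≤ j ∧ j ≤ c.length ∧ k = (c.take j).sum}

/-- Positions `i` and `j` (0-indexed members of `[N]`) lie in a common consecutive block of the
composition `c`: no partial sum of `c` separates them. -/
def sameBlock (c : List ℕ) (i j : ℕ) : Prop :=
  ∀ k ∈ PS c, ¬ (min i j < k ∧ k ≤ max i j)

/-- The spanning set of the seaweed algebra `p(a₁|⋯|a_n / b₁|⋯|b_m)`: all diagonal `E_{j,j}`,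
all `E_{p,q}` with `p > q` in a common block of `a`, and all `E_{p,q}` with `p < q` in a common
block of `b`. -/
def seaweedSet (a b : List ℕ) (N : ℕ) : Set (Matrix (Fin N) (Fin N) ℂ) :=
  {M | ∃ j, M = Emat N j j} ∪
  {M | ∃ p q : Fin N, (q : ℕ) < p ∧ sameBlock a (p : ℕ) (q : ℕ) ∧ M = Emat N p q} ∪
  {M | ∃ p q : Fin N, (p : ℕ) < q ∧ sameBlock b (p : ℕ) (q : ℕ) ∧ M = Emat N p q}

/-- The seaweed subalgebra `p(a / b)` of `gl(N,ℂ)`, spanned by `seaweedSet a b N`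
(this set is closed under brackets, so the Lie span coincides with the linear span). -/
def seaweed (a b : List ℕ) (N : ℕ) : LieSubalgebra ℂ (Matrix (Fin N) (Fin N) ℂ) :=
  LieSubalgebra.lieSpan ℂ _ (seaweedSet a b N)

/-- The span of all brackets `⁅x,y⁆` with `x ∈ A`, `y ∈ B`. -/
def bracketSpan {L : Type*} [LieRing L] [LieAlgebra ℂ L] (A B : Submodule ℂ L) :
    Submodule ℂ L :=
  Submodule.span ℂ {m | ∃ x ∈ A, ∃ y ∈ B, m = ⁅x, y⁆}

/-- The lower central series of a subspace `A`: `A₀ = A`, `A_{k+1} = ⁅A, A_k⁆`. -/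
def lcsS {L : Type*} [LieRing L] [LieAlgebra ℂ L] (A : Submodule ℂ L) : ℕ → Submodule ℂ L
  | 0 => A
  | k + 1 => bracketSpan A (lcsS A k)

/-- The nilradical of a Lie subalgebra `s`: the largest nilpotent ideal of `s`, realized as the
supremum of all nilpotent ideals of `s`. -/
def nilrad {L : Type*} [LieRing L] [LieAlgebra ℂ L] (s : LieSubalgebra ℂ L) : Submodule ℂ L :=
  sSup {I : Submodule ℂ L |
    I ≤ s.toSubmodule ∧ (∀ x ∈ s, ∀ y ∈ I, ⁅x, y⁆ ∈ I) ∧ ∃ k, lcsS I k = ⊥}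

/-- The center `Z(s) = {x ∈ s : ⁅x,y⁆ = 0 for all y ∈ s}` of a Lie subalgebra, as a subspace of
the ambient Lie algebra. -/
def centerSub {L : Type*} [LieRing L] [LieAlgebra ℂ L] (s : LieSubalgebra ℂ L) :
    Submodule ℂ L where
  carrier := {x | x ∈ s ∧ ∀ y ∈ s, ⁅x, y⁆ = 0}
  add_mem' := by
    rintro a b ⟨ha, ha2⟩ ⟨hb, hb2⟩
    exact ⟨add_mem ha hb, fun y hy => by rw [add_lie, ha2 y hy, hb2 y hy, add_zero]⟩
  zero_mem' := ⟨zero_mem _, fun y _ => by rw [zero_lie]⟩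
  smul_mem' := by
    rintro c x ⟨hx, hx2⟩
    exact ⟨s.smul_mem c hx, fun y hy => by rw [smul_lie, hx2 y hy, smul_zero]⟩

/-- The span of those `E_{p,q} ∈ s` with `E_{q,p} ∉ s`. -/
def nilpart (a b : List ℕ) (N : ℕ) : Submodule ℂ (Matrix (Fin N) (Fin N) ℂ) :=
  Submodule.span ℂ {M | ∃ p q : Fin N,
    M = Emat N p q ∧ Emat N p q ∈ seaweed a b N ∧ Emat N q p ∉ seaweed a b N}

/-! ### Auxiliary machinery for the proof -/

section Aux

open Matrix

-- ### Basic facts about `sameBlock`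

lemma sameBlock_sub {c : List ℕ} {i j i' j' : ℕ} (h : sameBlock c i j)
    (h1 : min i j ≤ min i' j') (h2 : max i' j' ≤ max i j) : sameBlock c i' j' := by
  intro k hk hc
  exact h k hk (by omega)

lemma sameBlock_trans {c : List ℕ} {i j l : ℕ} (h1 : sameBlock c i j) (h2 : sameBlock c j l) :
    sameBlock c i l := by
  intro k hk hc
  have A := h1 k hk
  have B := h2 k hk
  omega

-- ### Basic facts about elementary matrices

lemma Emat_mul (N : ℕ) (p q r s : Fin N) :
    Emat N p q * Emat N r s = if q = r then Emat N p s else 0 := by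
  unfold Emat
  by_cases h : q = r
  · subst h; simp
  · simp [h, Matrix.single_mul_single_of_ne (h := h)]

lemma lie_Emat (N : ℕ) (p q r s : Fin N) :
    ⁅Emat N p q, Emat N r s⁆ =
      (if q = r then Emat N p s else 0) - (if s = p then Emat N r q else 0) := by
  rw [Ring.lie_def]
  unfold Emat
  by_cases h1 : q = r <;> by_cases h2 : s = p <;>
    simp [h1, h2, Matrix.single_mul_single_of_ne]

lemma Emat_ne_zero {N : ℕ} (p q : Fin N) : Emat N p q ≠ 0 := by
  intro h
  have := congrFun (congrFun h p) q
  simp [Emat] at this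

lemma sandwich (N : ℕ) (x : Matrix (Fin N) (Fin N) ℂ) (p q : Fin N) :
    Emat N p p * x * Emat N q q = x p q • Emat N p q := by
  ext i j
  by_cases hj : j = q
  · subst hj
    rw [Emat, Emat, Matrix.mul_single_apply_same]
    by_cases hi : i = p
    · subst hi; simp [Emat]
    · simp [Emat, hi, Matrix.single_mul_apply_of_ne (h := hi),
        Matrix.single_apply_of_row_ne (show p ≠ i from fun h => hi h.symm)]
  · simp [Emat, Matrix.mul_single_apply_of_ne (hbj := hj),
      Matrix.single_apply_of_col_ne _ _ (show q ≠ j from fun h => hj h.symm)]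

lemma comp1 (N : ℕ) (x : Matrix (Fin N) (Fin N) ℂ) (p q : Fin N) (hpq : p ≠ q) :
    ⁅⁅Emat N p p, x⁆, Emat N q q⁆ = x p q • Emat N p q + x q p • Emat N q p := by
  have h1 : Emat N p p * Emat N q q = 0 := by rw [Emat_mul, if_neg hpq]
  have h2 : Emat N q q * Emat N p p = 0 := by rw [Emat_mul, if_neg (Ne.symm hpq)]
  rw [Ring.lie_def, Ring.lie_def]
  rw [show (Emat N p p * x - x * Emat N p p) * Emat N q q
      - Emat N q q * (Emat N p p * x - x * Emat N p p)
      = Emat N p p * x * Emat N q q - x * (Emat N p p * Emat N q q)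
      - (Emat N q q * Emat N p p) * x + Emat N q q * x * Emat N p p by noncomm_ring]
  rw [h1, h2, sandwich, sandwich]
  simp

lemma diag_lie (N : ℕ) (f : Fin N → ℂ) (p q : Fin N) :
    ⁅Matrix.diagonal f, Emat N p q⁆ = (f p - f q) • Emat N p q := by
  ext i j
  rw [Ring.lie_def, Matrix.sub_apply, Matrix.smul_apply, Matrix.diagonal_mul,
    Matrix.mul_diagonal]
  by_cases h : p = i ∧ q = j
  · obtain ⟨rfl, rfl⟩ := h
    rw [Emat, Matrix.single_apply_same, smul_eq_mul]
    ring
  · rw [Emat, Matrix.single_apply_of_ne (h := h), smul_eq_mul]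
    ring

-- ### The pattern of a seaweed and its transitivity

def patP (a b : List ℕ) {N : ℕ} (p q : Fin N) : Prop :=
  p = q ∨ ((q : ℕ) < (p : ℕ) ∧ sameBlock a p q) ∨ ((p : ℕ) < (q : ℕ) ∧ sameBlock b p q)

lemma patP_refl {a b : List ℕ} {N : ℕ} {p : Fin N} : patP a b p p := Or.inl rfl

lemma patP_trans {a b : List ℕ} {N : ℕ} {p q r : Fin N}
    (h1 : patP a b p q) (h2 : patP a b q r) : patP a b p r := by
  rcases h1 with h1 | ⟨h1, hs1⟩ | ⟨h1, hs1⟩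
  · rwa [h1]
  · rcases h2 with h2 | ⟨h2, hs2⟩ | ⟨h2, hs2⟩
    · subst h2; exact Or.inr (Or.inl ⟨h1, hs1⟩)
    · exact Or.inr (Or.inl ⟨by omega, sameBlock_trans hs1 hs2⟩)
    · rcases lt_trichotomy (p : ℕ) (r : ℕ) with h | h | h
      · exact Or.inr (Or.inr ⟨h, sameBlock_sub hs2 (by omega) (by omega)⟩)
      · exact Or.inl (Fin.ext h)
      · exact Or.inr (Or.inl ⟨h, sameBlock_sub hs1 (by omega) (by omega)⟩)
  · rcases h2 with h2 | ⟨h2, hs2⟩ | ⟨h2, hs2⟩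
    · subst h2; exact Or.inr (Or.inr ⟨h1, hs1⟩)
    · rcases lt_trichotomy (p : ℕ) (r : ℕ) with h | h | h
      · exact Or.inr (Or.inr ⟨h, sameBlock_sub hs1 (by omega) (by omega)⟩)
      · exact Or.inl (Fin.ext h)
      · exact Or.inr (Or.inl ⟨h, sameBlock_sub hs2 (by omega) (by omega)⟩)
    · exact Or.inr (Or.inr ⟨by omega, sameBlock_trans hs1 hs2⟩)

/-- Matrices supported on the seaweed pattern form a Lie subalgebra. -/
def patAlg (a b : List ℕ) (N : ℕ) : LieSubalgebra ℂ (Matrix (Fin N) (Fin N) ℂ) where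
  carrier := {M | ∀ p q : Fin N, ¬ patP a b p q → M p q = 0}
  add_mem' := fun hx hy p q h => by
    rw [Matrix.add_apply, hx p q h, hy p q h, add_zero]
  zero_mem' := fun p q h => rfl
  smul_mem' := fun c x hx p q h => by rw [Matrix.smul_apply, hx p q h, smul_zero]
  lie_mem' := by
    intro x y hx hy p q h
    rw [Ring.lie_def, Matrix.sub_apply, Matrix.mul_apply, Matrix.mul_apply]
    have e1 : ∀ r ∈ Finset.univ, x p r * y r q = 0 := by
      intro r _
      by_cases h1 : patP a b p r
      · have h2 : ¬ patP a b r q := fun h2 => h (patP_trans h1 h2)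
        rw [hy r q h2, mul_zero]
      · rw [hx p r h1, zero_mul]
    have e2 : ∀ r ∈ Finset.univ, y p r * x r q = 0 := by
      intro r _
      by_cases h1 : patP a b p r
      · have h2 : ¬ patP a b r q := fun h2 => h (patP_trans h1 h2)
        rw [hx r q h2, mul_zero]
      · rw [hy p r h1, zero_mul]
    rw [Finset.sum_eq_zero e1, Finset.sum_eq_zero e2, sub_zero]

lemma seaweedSet_form {a b : List ℕ} {N : ℕ} {M : Matrix (Fin N) (Fin N) ℂ}
    (h : M ∈ seaweedSet a b N) : ∃ r s : Fin N, patP a b r s ∧ M = Emat N r s := by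
  rcases h with (⟨j, rfl⟩ | ⟨p, q, h1, h2, rfl⟩) | ⟨p, q, h1, h2, rfl⟩
  · exact ⟨j, j, patP_refl, rfl⟩
  · exact ⟨p, q, Or.inr (Or.inl ⟨h1, h2⟩), rfl⟩
  · exact ⟨p, q, Or.inr (Or.inr ⟨h1, h2⟩), rfl⟩

lemma seaweed_supp {a b : List ℕ} {N : ℕ} {x : Matrix (Fin N) (Fin N) ℂ}
    (hx : x ∈ seaweed a b N) : ∀ p q : Fin N, ¬ patP a b p q → x p q = 0 := by
  have hle : seaweed a b N ≤ patAlg a b N := by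
    apply LieSubalgebra.lieSpan_le.mpr
    intro M hM
    obtain ⟨r, s, hrs, rfl⟩ := seaweedSet_form hM
    intro p q h
    by_cases hc : r = p ∧ s = q
    · exact absurd (hc.1 ▸ hc.2 ▸ hrs) h
    · exact Matrix.single_apply_of_ne (c := (1:ℂ)) (h := hc)
  exact hle hx

lemma Emat_mem_seaweed {a b : List ℕ} {N : ℕ} {r s : Fin N} (h : patP a b r s) :
    Emat N r s ∈ seaweed a b N := by
  apply LieSubalgebra.subset_lieSpan
  rcases h with h | ⟨h1, h2⟩ | ⟨h1, h2⟩
  · exact Or.inl (Or.inl ⟨r, by rw [h]⟩)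
  · exact Or.inl (Or.inr ⟨r, s, h1, h2, rfl⟩)
  · exact Or.inr ⟨r, s, h1, h2, rfl⟩

lemma Emat_mem_seaweed_iff {a b : List ℕ} {N : ℕ} {r s : Fin N} :
    Emat N r s ∈ seaweed a b N ↔ patP a b r s := by
  constructor
  · intro h
    by_contra hc
    have := seaweed_supp h r s hc
    simp [Emat] at this
  · exact Emat_mem_seaweed

-- ### The strict order underlying the nilpart

def Rr (a b : List ℕ) {N : ℕ} (p q : Fin N) : Prop := patP a b p q ∧ ¬ patP a b q p

lemma Rr_trans {a b : List ℕ} {N : ℕ} {p q r : Fin N}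
    (h1 : Rr a b p q) (h2 : Rr a b q r) : Rr a b p r :=
  ⟨patP_trans h1.1 h2.1, fun hc => h1.2 (patP_trans h2.1 hc)⟩

lemma Rr_irrefl {a b : List ℕ} {N : ℕ} (p : Fin N) : ¬ Rr a b p p := fun h => h.2 patP_refl

lemma Rr_ne {a b : List ℕ} {N : ℕ} {p q : Fin N} (h : Rr a b p q) : p ≠ q := by
  rintro rfl; exact Rr_irrefl p h

lemma nilpart_eq (a b : List ℕ) (N : ℕ) :
    nilpart a b N =
      Submodule.span ℂ {M | ∃ p q : Fin N, Rr a b p q ∧ M = Emat N p q} := by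
  rw [nilpart]
  congr 1
  ext M
  constructor
  · rintro ⟨p, q, rfl, h1, h2⟩
    exact ⟨p, q, ⟨Emat_mem_seaweed_iff.mp h1, fun hc => h2 (Emat_mem_seaweed hc)⟩, rfl⟩
  · rintro ⟨p, q, h, rfl⟩
    exact ⟨p, q, rfl, Emat_mem_seaweed h.1, fun hc => h.2 (Emat_mem_seaweed_iff.mp hc)⟩

lemma nilpart_gen {a b : List ℕ} {N : ℕ} {p q : Fin N} (h : Rr a b p q) :
    Emat N p q ∈ nilpart a b N := by
  rw [nilpart_eq]
  exact Submodule.subset_span ⟨p, q, h, rfl⟩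

lemma lie_gen_nilpart {a b : List ℕ} {N : ℕ} {r s p q : Fin N}
    (hrs : patP a b r s) (hpq : Rr a b p q) :
    ⁅Emat N r s, Emat N p q⁆ ∈ nilpart a b N := by
  rw [lie_Emat]
  apply sub_mem
  · split_ifs with h
    · subst h
      exact nilpart_gen ⟨patP_trans hrs hpq.1, fun hc => hpq.2 (patP_trans hc hrs)⟩
    · exact zero_mem _
  · split_ifs with h
    · subst h
      exact nilpart_gen ⟨patP_trans hpq.1 hrs, fun hc => hpq.2 (patP_trans hrs hc)⟩
    · exact zero_mem _

-- ### Helper submodules and subalgebras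

/-- `{y | ⁅g, y⁆ ∈ C}` as a submodule. -/
def lieInto {L : Type*} [LieRing L] [LieAlgebra ℂ L] (g : L) (C : Submodule ℂ L) :
    Submodule ℂ L where
  carrier := {y | ⁅g, y⁆ ∈ C}
  add_mem' := fun {u v} hu hv => by
    show ⁅g, u + v⁆ ∈ C; rw [lie_add]; exact C.add_mem hu hv
  zero_mem' := by show ⁅g, (0 : L)⁆ ∈ C; rw [lie_zero]; exact C.zero_mem
  smul_mem' := fun c u hu => by show ⁅g, c • u⁆ ∈ C; rw [lie_smul]; exact C.smul_mem c hu

lemma mem_lieInto {L : Type*} [LieRing L] [LieAlgebra ℂ L] {g : L} {C : Submodule ℂ L}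
    {y : L} : y ∈ lieInto g C ↔ ⁅g, y⁆ ∈ C := Iff.rfl

/-- `{x | ∀ y ∈ B, ⁅x, y⁆ ∈ C}` as a submodule. -/
def intoLie {L : Type*} [LieRing L] [LieAlgebra ℂ L] (B C : Submodule ℂ L) :
    Submodule ℂ L where
  carrier := {x | ∀ y ∈ B, ⁅x, y⁆ ∈ C}
  add_mem' := fun {u v} hu hv => by
    intro y hy
    rw [add_lie]; exact C.add_mem (hu y hy) (hv y hy)
  zero_mem' := fun y hy => by rw [zero_lie]; exact C.zero_mem
  smul_mem' := fun c u hu y hy => by rw [smul_lie]; exact C.smul_mem c (hu y hy)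

lemma mem_intoLie {L : Type*} [LieRing L] [LieAlgebra ℂ L] {B C : Submodule ℂ L}
    {x : L} : x ∈ intoLie B C ↔ ∀ y ∈ B, ⁅x, y⁆ ∈ C := Iff.rfl

/-- The stabilizer `{x | ⁅x, T⁆ ⊆ T}` as a Lie subalgebra. -/
def adStab {L : Type*} [LieRing L] [LieAlgebra ℂ L] (T : Submodule ℂ L) :
    LieSubalgebra ℂ L where
  carrier := {x | ∀ y ∈ T, ⁅x, y⁆ ∈ T}
  zero_mem' := fun y hy => by rw [zero_lie]; exact T.zero_mem
  add_mem' := fun {u v} hu hv y hy => by rw [add_lie]; exact T.add_mem (hu y hy) (hv y hy)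
  smul_mem' := fun c u hu y hy => by rw [smul_lie]; exact T.smul_mem c (hu y hy)
  lie_mem' := fun {u v} hu hv y hy => by
    rw [lie_lie]; exact T.sub_mem (hu _ (hv y hy)) (hv _ (hu y hy))

/-- The centralizer of an element as a Lie subalgebra. -/
def centz {L : Type*} [LieRing L] [LieAlgebra ℂ L] (d : L) : LieSubalgebra ℂ L where
  carrier := {y | ⁅d, y⁆ = 0}
  zero_mem' := lie_zero d
  add_mem' := fun {u v} hu hv => by
    show ⁅d, u + v⁆ = 0
    rw [lie_add, show ⁅d, u⁆ = 0 from hu, show ⁅d, v⁆ = 0 from hv, add_zero]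
  smul_mem' := fun c u hu => by
    show ⁅d, c • u⁆ = 0
    rw [lie_smul, show ⁅d, u⁆ = 0 from hu, smul_zero]
  lie_mem' := fun {u v} hu hv => by
    show ⁅d, ⁅u, v⁆⁆ = 0
    rw [leibniz_lie, show ⁅d, u⁆ = 0 from hu, show ⁅d, v⁆ = 0 from hv, zero_lie, lie_zero,
      add_zero]

/-- Matrices with vanishing diagonal, as a submodule. -/
def diagZero (N : ℕ) : Submodule ℂ (Matrix (Fin N) (Fin N) ℂ) where
  carrier := {M | ∀ i, M i i = 0}
  zero_mem' := fun i => rfl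
  add_mem' := fun {A B} hA hB i => by rw [Matrix.add_apply, hA i, hB i, add_zero]
  smul_mem' := fun c A hA i => by rw [Matrix.smul_apply, hA i, smul_zero]

-- ### The sup `T = nilpart ⊔ center` is a nilpotent ideal

lemma T_le_seaweed (a b : List ℕ) (N : ℕ) :
    nilpart a b N ⊔ centerSub (seaweed a b N) ≤ (seaweed a b N).toSubmodule := by
  apply sup_le
  · rw [nilpart]
    apply Submodule.span_le.mpr
    rintro M ⟨p, q, rfl, h1, h2⟩
    exact h1
  · exact fun z hz => hz.1

lemma T_ideal (a b : List ℕ) (N : ℕ) :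
    ∀ x ∈ seaweed a b N, ∀ y ∈ nilpart a b N ⊔ centerSub (seaweed a b N),
      ⁅x, y⁆ ∈ nilpart a b N ⊔ centerSub (seaweed a b N) := by
  intro x hx
  have hle : seaweed a b N ≤ adStab (nilpart a b N ⊔ centerSub (seaweed a b N)) := by
    apply LieSubalgebra.lieSpan_le.mpr
    intro g hg
    obtain ⟨r, s, hrs, rfl⟩ := seaweedSet_form hg
    show ∀ y ∈ nilpart a b N ⊔ centerSub (seaweed a b N),
      ⁅Emat N r s, y⁆ ∈ nilpart a b N ⊔ centerSub (seaweed a b N)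
    have hsub : nilpart a b N ⊔ centerSub (seaweed a b N) ≤
        lieInto (Emat N r s) (nilpart a b N ⊔ centerSub (seaweed a b N)) := by
      apply sup_le
      · refine (nilpart_eq a b N).trans_le ?_
        apply Submodule.span_le.mpr
        rintro M ⟨p, q, hpq, rfl⟩
        show ⁅Emat N r s, Emat N p q⁆ ∈ nilpart a b N ⊔ centerSub (seaweed a b N)
        exact Submodule.mem_sup_left (lie_gen_nilpart hrs hpq)
      · intro z hz
        show ⁅Emat N r s, z⁆ ∈ nilpart a b N ⊔ centerSub (seaweed a b N)
        rw [← lie_skew, hz.2 _ (Emat_mem_seaweed hrs), neg_zero]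
        exact zero_mem _
    exact fun y hy => hsub hy
  exact fun y hy => hle hx y hy

-- chains for nilpotency

def chainR (a b : List ℕ) {N : ℕ} (k : ℕ) (p q : Fin N) : Prop :=
  ∃ c : ℕ → Fin N, c 0 = p ∧ c k = q ∧ ∀ i < k, Rr a b (c i) (c (i + 1))

def Mk (a b : List ℕ) (N : ℕ) (k : ℕ) : Submodule ℂ (Matrix (Fin N) (Fin N) ℂ) :=
  Submodule.span ℂ {M | ∃ p q : Fin N, chainR a b k p q ∧ M = Emat N p q}

lemma chain_steps_R {a b : List ℕ} {N : ℕ} {k : ℕ} {c : ℕ → Fin N}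
    (hc : ∀ i < k, Rr a b (c i) (c (i + 1))) :
    ∀ i j, i < j → j ≤ k → Rr a b (c i) (c j) := by
  intro i j
  induction j with
  | zero => omega
  | succ j ih =>
    intro hij hjk
    by_cases h : i = j
    · subst h; exact hc i (by omega)
    · exact Rr_trans (ih (by omega) (by omega)) (hc j (by omega))

lemma chainR_Rr {a b : List ℕ} {N : ℕ} {k : ℕ} {p q : Fin N} (hk : 1 ≤ k)
    (h : chainR a b k p q) : Rr a b p q := by
  obtain ⟨c, h0, hk', hc⟩ := h
  have := chain_steps_R hc 0 k (by omega) le_rfl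
  rwa [h0, hk'] at this

lemma no_long_chain {a b : List ℕ} {N : ℕ} {m : ℕ} (hm : N < m) {p q : Fin N} :
    ¬ chainR a b m p q := by
  rintro ⟨c, -, -, hc⟩
  have hinj : Function.Injective (fun i : Fin (m + 1) => c i) := by
    intro i j hij
    have hij' : c (i : ℕ) = c (j : ℕ) := hij
    by_contra hne
    have hv : (i : ℕ) ≠ (j : ℕ) := fun h => hne (Fin.ext h)
    rcases Nat.lt_or_ge (i : ℕ) (j : ℕ) with h | h
    · have hR := chain_steps_R hc i j h (Nat.le_of_lt_succ j.isLt)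
      rw [hij'] at hR
      exact Rr_irrefl _ hR
    · have hR := chain_steps_R hc j i (by omega) (Nat.le_of_lt_succ i.isLt)
      rw [hij'] at hR
      exact Rr_irrefl _ hR
  have := Fintype.card_le_of_injective _ hinj
  simp only [Fintype.card_fin] at this
  omega

lemma Mk_le_seaweed (a b : List ℕ) (N : ℕ) {k : ℕ} (hk : 1 ≤ k) :
    Mk a b N k ≤ (seaweed a b N).toSubmodule := by
  apply Submodule.span_le.mpr
  rintro M ⟨p, q, hch, rfl⟩
  exact Emat_mem_seaweed (chainR_Rr hk hch).1

lemma chain_extend_left {a b : List ℕ} {N : ℕ} {k : ℕ} {p q r : Fin N}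
    (h : Rr a b r p) (hch : chainR a b k p q) : chainR a b (k + 1) r q := by
  obtain ⟨c, h0, hk, hc⟩ := hch
  refine ⟨fun i => if i = 0 then r else c (i - 1), if_pos rfl, ?_, ?_⟩
  · show (if k + 1 = 0 then r else c (k + 1 - 1)) = q
    rw [if_neg (Nat.succ_ne_zero k), Nat.add_sub_cancel]
    exact hk
  · intro i hi
    rcases Nat.eq_zero_or_pos i with rfl | hip
    · simpa [h0] using h
    · have h1 : i ≠ 0 := by omega
      have h2 : i + 1 ≠ 0 := by omega
      show Rr a b (if i = 0 then r else c (i - 1)) (if i + 1 = 0 then r else c (i + 1 - 1))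
      rw [if_neg h1, if_neg h2, Nat.add_sub_cancel]
      have h3 : i - 1 < k := by omega
      have h4 := hc (i - 1) h3
      rwa [Nat.sub_add_cancel hip] at h4

lemma chain_extend_right {a b : List ℕ} {N : ℕ} {k : ℕ} {p q s : Fin N}
    (hch : chainR a b k p q) (h : Rr a b q s) : chainR a b (k + 1) p s := by
  obtain ⟨c, h0, hk, hc⟩ := hch
  refine ⟨fun i => if i ≤ k then c i else s, by simpa using h0, ?_, ?_⟩
  · show (if k + 1 ≤ k then c (k + 1) else s) = s
    rw [if_neg (by omega)]
  · intro i hi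
    by_cases hik : i < k
    · show Rr a b (if i ≤ k then c i else s) (if i + 1 ≤ k then c (i + 1) else s)
      rw [if_pos (by omega), if_pos (by omega)]
      exact hc i hik
    · have hik' : i = k := by omega
      subst hik'
      show Rr a b (if i ≤ i then c i else s) (if i + 1 ≤ i then c (i + 1) else s)
      rw [if_pos le_rfl, if_neg (by omega), hk]
      exact h

lemma lie_gen_Mk {a b : List ℕ} {N : ℕ} {k : ℕ} {r s p q : Fin N}
    (hrs : Rr a b r s) (hch : chainR a b k p q) :
    ⁅Emat N r s, Emat N p q⁆ ∈ Mk a b N (k + 1) := by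
  rw [lie_Emat]
  apply sub_mem
  · split_ifs with h
    · exact Submodule.subset_span ⟨r, q, chain_extend_left (by rwa [h] at hrs) hch, rfl⟩
    · exact zero_mem _
  · split_ifs with h
    · exact Submodule.subset_span ⟨p, s, chain_extend_right hch (by rwa [← h] at hrs), rfl⟩
    · exact zero_mem _

lemma nilpart_le_M1 (a b : List ℕ) (N : ℕ) : nilpart a b N ≤ Mk a b N 1 := by
  rw [nilpart_eq]
  apply Submodule.span_le.mpr
  rintro M ⟨p, q, h, rfl⟩
  apply Submodule.subset_span
  refine ⟨p, q, ⟨fun i => if i = 0 then p else q, if_pos rfl, by norm_num, ?_⟩, rfl⟩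
  intro i hi
  have : i = 0 := by omega
  subst this
  simpa using h

lemma T_lie_M (a b : List ℕ) (N : ℕ) (k : ℕ) (hk : 1 ≤ k) :
    ∀ x ∈ nilpart a b N ⊔ centerSub (seaweed a b N),
      ∀ y ∈ Mk a b N k ⊔ centerSub (seaweed a b N), ⁅x, y⁆ ∈ Mk a b N (k + 1) := by
  have hle : nilpart a b N ⊔ centerSub (seaweed a b N) ≤
      intoLie (Mk a b N k ⊔ centerSub (seaweed a b N)) (Mk a b N (k + 1)) := by
    apply sup_le
    · refine (nilpart_eq a b N).trans_le ?_
      apply Submodule.span_le.mpr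
      rintro M ⟨p', q', hR, rfl⟩
      show ∀ y ∈ Mk a b N k ⊔ centerSub (seaweed a b N), ⁅Emat N p' q', y⁆ ∈ Mk a b N (k + 1)
      intro y hy
      have hsub : Mk a b N k ⊔ centerSub (seaweed a b N) ≤
          lieInto (Emat N p' q') (Mk a b N (k + 1)) := by
        apply sup_le
        · apply Submodule.span_le.mpr
          rintro M' ⟨p, q, hch, rfl⟩
          show ⁅Emat N p' q', Emat N p q⁆ ∈ Mk a b N (k + 1)
          exact lie_gen_Mk hR hch
        · intro z hz
          show ⁅Emat N p' q', z⁆ ∈ Mk a b N (k + 1)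
          rw [← lie_skew, hz.2 _ (Emat_mem_seaweed hR.1), neg_zero]
          exact zero_mem _
      exact hsub hy
    · intro z hz
      show ∀ y ∈ Mk a b N k ⊔ centerSub (seaweed a b N), ⁅z, y⁆ ∈ Mk a b N (k + 1)
      intro y hy
      have hys : y ∈ seaweed a b N :=
        (sup_le (Mk_le_seaweed a b N hk) (fun w (hw : w ∈ centerSub (seaweed a b N)) => hw.1)) hy
      rw [hz.2 y hys]
      exact zero_mem _
  exact fun x hx => hle hx

lemma lcs_T_le (a b : List ℕ) (N : ℕ) (j : ℕ) :
    lcsS (nilpart a b N ⊔ centerSub (seaweed a b N)) (j + 1) ≤ Mk a b N (j + 2) := by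
  induction j with
  | zero =>
    show bracketSpan _ _ ≤ _
    apply Submodule.span_le.mpr
    rintro m ⟨x, hx, y, hy, rfl⟩
    have hy' : y ∈ Mk a b N 1 ⊔ centerSub (seaweed a b N) :=
      (sup_le_sup_right (nilpart_le_M1 a b N) _) hy
    exact T_lie_M a b N 1 le_rfl x hx y hy'
  | succ j ih =>
    show bracketSpan _ _ ≤ _
    apply Submodule.span_le.mpr
    rintro m ⟨x, hx, y, hy, rfl⟩
    have hy' : y ∈ Mk a b N (j + 2) ⊔ centerSub (seaweed a b N) :=
      Submodule.mem_sup_left (ih hy)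
    exact T_lie_M a b N (j + 2) (by omega) x hx y hy'

lemma T_nilpotent (a b : List ℕ) (N : ℕ) :
    lcsS (nilpart a b N ⊔ centerSub (seaweed a b N)) (N + 1) = ⊥ := by
  apply le_bot_iff.mp
  refine le_trans (lcs_T_le a b N N) ?_
  apply Submodule.span_le.mpr
  rintro m ⟨p, q, hch, rfl⟩
  exact absurd hch (no_long_chain (by omega))

-- ### Nilpotent ideals have eigenvector obstructions

lemma eigen_mem_lcs {L : Type*} [LieRing L] [LieAlgebra ℂ L] {I : Submodule ℂ L}
    {u v : L} (hu : u ∈ I) (hv : v ∈ I) {c : ℂ} (hc : c ≠ 0) (h : ⁅u, v⁆ = c • v) :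
    ∀ k, v ∈ lcsS I k := by
  intro k
  induction k with
  | zero => exact hv
  | succ k ih =>
    have hm : ⁅u, v⁆ ∈ lcsS I (k + 1) := Submodule.subset_span ⟨u, hu, v, ih, rfl⟩
    rw [h] at hm
    have := (lcsS I (k + 1)).smul_mem c⁻¹ hm
    rwa [inv_smul_smul₀ hc] at this

-- ### Maximality: any nilpotent ideal is contained in `T`

lemma max_ideal (a b : List ℕ) (N : ℕ) (I : Submodule ℂ (Matrix (Fin N) (Fin N) ℂ))
    (hI1 : I ≤ (seaweed a b N).toSubmodule)
    (hI2 : ∀ x ∈ seaweed a b N, ∀ y ∈ I, ⁅x, y⁆ ∈ I)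
    (hI3 : ∃ k, lcsS I k = ⊥) :
    I ≤ nilpart a b N ⊔ centerSub (seaweed a b N) := by
  obtain ⟨k, hk⟩ := hI3
  have hnonil : ∀ (u v : Matrix (Fin N) (Fin N) ℂ) (c : ℂ), u ∈ I → v ∈ I → c ≠ 0 →
      ⁅u, v⁆ = c • v → v = 0 := by
    intro u v c hu hv hc h
    by_contra hv0
    have := eigen_mem_lcs hu hv hc h k
    rw [hk] at this
    exact hv0 ((Submodule.mem_bot ℂ).mp this)
  intro x hx
  have hextract : ∀ p q : Fin N, p ≠ q → (x p q) • Emat N p q ∈ I := by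
    intro p q hpq
    have h1 : ⁅Emat N p p, x⁆ ∈ I := hI2 _ (Emat_mem_seaweed patP_refl) x hx
    have h2 : ⁅Emat N q q, ⁅Emat N p p, x⁆⁆ ∈ I := hI2 _ (Emat_mem_seaweed patP_refl) _ h1
    have hz : ⁅⁅Emat N p p, x⁆, Emat N q q⁆ ∈ I := by
      rw [← lie_skew]
      exact I.neg_mem h2
    have hw : ⁅Emat N p p, ⁅⁅Emat N p p, x⁆, Emat N q q⁆⁆ ∈ I :=
      hI2 _ (Emat_mem_seaweed patP_refl) _ hz
    rw [comp1 N x p q hpq] at hz hw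
    have hcomp : ⁅Emat N p p, x p q • Emat N p q + x q p • Emat N q p⁆
        = x p q • Emat N p q - x q p • Emat N q p := by
      rw [lie_add, lie_smul, lie_smul, lie_Emat, lie_Emat]
      simp [hpq, Ne.symm hpq]
      abel
    rw [hcomp] at hw
    have hsum : x p q • Emat N p q = (2⁻¹ : ℂ) •
        ((x p q • Emat N p q + x q p • Emat N q p)
          + (x p q • Emat N p q - x q p • Emat N q p)) := by
      have e : (x p q • Emat N p q + x q p • Emat N q p)
          + (x p q • Emat N p q - x q p • Emat N q p) = (2 * x p q) • Emat N p q := by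
        rw [two_mul, add_smul]
        abel
      rw [e, smul_smul, show (2⁻¹ : ℂ) * (2 * x p q) = x p q by ring]
    rw [hsum]
    exact I.smul_mem _ (I.add_mem hz hw)
  have hoff : ∀ p q : Fin N, p ≠ q → (x p q) • Emat N p q ∈ nilpart a b N := by
    intro p q hpq
    by_cases hx0 : x p q = 0
    · rw [hx0, zero_smul]; exact zero_mem _
    · have hE : Emat N p q ∈ I := by
        have := I.smul_mem (x p q)⁻¹ (hextract p q hpq)
        rwa [inv_smul_smul₀ hx0] at this
      have hpat : patP a b p q := by
        by_contra hc
        exact hx0 (seaweed_supp (hI1 hx) p q hc)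
      have hnq : ¬ patP a b q p := by
        intro hqp
        have hh : ⁅Emat N q p, Emat N p q⁆ ∈ I := hI2 _ (Emat_mem_seaweed hqp) _ hE
        have hval : ⁅Emat N q p, Emat N p q⁆ = Emat N q q - Emat N p p := by
          rw [lie_Emat, if_pos (rfl : p = p), if_pos (rfl : q = q)]
        rw [hval] at hh
        have hu : Emat N p p - Emat N q q ∈ I := by
          have := I.neg_mem hh
          rwa [neg_sub] at this
        have hlie : ⁅Emat N p p - Emat N q q, Emat N p q⁆ = (2 : ℂ) • Emat N p q := by
          rw [sub_lie, lie_Emat, lie_Emat]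
          simp [hpq, Ne.symm hpq, two_smul]
        exact Emat_ne_zero p q (hnonil _ _ _ hu hE two_ne_zero hlie)
      exact Submodule.smul_mem _ _ (nilpart_gen ⟨hpat, hnq⟩)
  have hS : ∀ i j : Fin N,
      (∑ p : Fin N, ∑ q : Fin N, if p = q then 0 else x p q • Emat N p q) i j
        = if i = j then 0 else x i j := by
    intro i j
    rw [Matrix.sum_apply]
    rw [Finset.sum_eq_single i]
    · rw [Matrix.sum_apply, Finset.sum_eq_single j]
      · by_cases h : i = j <;> simp [h, Emat]
      · intro q _ hq
        by_cases h : i = q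
        · simp [h]
        · simp [h, Emat, Matrix.single_apply_of_col_ne _ _ hq]
      · intro h; exact absurd (Finset.mem_univ j) h
    · intro p _ hp
      rw [Matrix.sum_apply]
      apply Finset.sum_eq_zero
      intro q _
      by_cases h : p = q
      · simp [h]
      · simp [h, Emat, Matrix.single_apply_of_row_ne hp]
    · intro h; exact absurd (Finset.mem_univ i) h
  have hsplit : x = Matrix.diagonal (fun i => x i i)
      + ∑ p : Fin N, ∑ q : Fin N, if p = q then 0 else x p q • Emat N p q := by
    ext i j
    rw [Matrix.add_apply, hS i j]
    by_cases h : i = j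
    · subst h; simp
    · rw [Matrix.diagonal_apply_ne _ h, if_neg h, zero_add]
  have hSI : (∑ p : Fin N, ∑ q : Fin N, if p = q then 0 else x p q • Emat N p q) ∈ I := by
    apply Submodule.sum_mem
    intro p _
    apply Submodule.sum_mem
    intro q _
    by_cases h : p = q
    · rw [if_pos h]; exact zero_mem _
    · rw [if_neg h]; exact hextract p q h
  have hdI : Matrix.diagonal (fun i => x i i) ∈ I := by
    have e : Matrix.diagonal (fun i => x i i)
        = x - ∑ p : Fin N, ∑ q : Fin N, if p = q then 0 else x p q • Emat N p q :=
      eq_sub_of_add_eq hsplit.symm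
    rw [e]
    exact I.sub_mem hx hSI
  have hdcenter : Matrix.diagonal (fun i => x i i) ∈ centerSub (seaweed a b N) := by
    refine ⟨hI1 hdI, ?_⟩
    have hle : seaweed a b N ≤ centz (Matrix.diagonal fun i => x i i) := by
      apply LieSubalgebra.lieSpan_le.mpr
      intro g hg
      obtain ⟨r, s, hrs, rfl⟩ := seaweedSet_form hg
      show ⁅Matrix.diagonal (fun i => x i i), Emat N r s⁆ = 0
      by_cases hrs' : r = s
      · subst hrs'
        rw [diag_lie, sub_self, zero_smul]
      · by_cases hvv : x r r = x s s
        · rw [diag_lie, hvv, sub_self, zero_smul]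
        · exfalso
          have hc0 : x r r - x s s ≠ 0 := sub_ne_zero_of_ne hvv
          have hEs : Emat N r s ∈ seaweed a b N := Emat_mem_seaweed hrs
          have h1 : ⁅Emat N r s, Matrix.diagonal (fun i => x i i)⁆ ∈ I :=
            hI2 _ hEs _ hdI
          have h2 : ⁅Emat N r s, Matrix.diagonal (fun i => x i i)⁆
              = (-(x r r - x s s)) • Emat N r s := by
            rw [← lie_skew, diag_lie, neg_smul]
          rw [h2] at h1
          have hEI : Emat N r s ∈ I := by
            have := I.smul_mem (-(x r r - x s s))⁻¹ h1
            rwa [inv_smul_smul₀ (neg_ne_zero.mpr hc0)] at this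
          exact Emat_ne_zero r s
            (hnonil _ _ _ hdI hEI hc0 (diag_lie N (fun i => x i i) r s))
    intro y hy
    exact hle hy
  have hfin : x ∈ nilpart a b N ⊔ centerSub (seaweed a b N) := by
    rw [hsplit]
    apply add_mem
    · exact Submodule.mem_sup_right hdcenter
    · apply Submodule.sum_mem
      intro p _
      apply Submodule.sum_mem
      intro q _
      by_cases h : p = q
      · rw [if_pos h]; exact zero_mem _
      · rw [if_neg h]
        exact Submodule.mem_sup_left (hoff p q h)
  exact hfin

end Aux


/-- The nilradical of a seaweed algebra `s` decomposes as the (internal) direct sum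
`n(s) = span{E_{p,q} ∈ s : E_{q,p} ∉ s} ⊕ Z(s)`. -/
theorem nilradical_decomposition (a b : List ℕ) (N : ℕ)
    (hsa : a.sum = N) (hsb : b.sum = N)
    (hpa : ∀ n ∈ a, 0 < n) (hpb : ∀ n ∈ b, 0 < n) :
    nilrad (seaweed a b N) = nilpart a b N ⊔ centerSub (seaweed a b N) ∧
    nilpart a b N ⊓ centerSub (seaweed a b N) = ⊥ := by
  constructor
  · unfold nilrad
    apply le_antisymm
    · exact sSup_le (fun I hI => max_ideal a b N I hI.1 hI.2.1 hI.2.2)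
    · exact le_sSup ⟨T_le_seaweed a b N, T_ideal a b N, N + 1, T_nilpotent a b N⟩
  · rw [eq_bot_iff]
    intro x hx
    obtain ⟨hx1, hx2⟩ := Submodule.mem_inf.mp hx
    have hoffd : ∀ i j : Fin N, i ≠ j → x i j = 0 := by
      intro i j hij
      have h := hx2.2 (Emat N j j) (Emat_mem_seaweed patP_refl)
      rw [Ring.lie_def] at h
      have h2 := congrFun (congrFun h i) j
      have e1 : (x * Emat N j j) i j = x i j := by
        rw [Emat, Matrix.mul_single_apply_same, mul_one]
      have e2 : (Emat N j j * x) i j = 0 := by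
        rw [Emat]
        exact Matrix.single_mul_apply_of_ne (c := (1:ℂ)) j j i j hij x
      rw [Matrix.sub_apply, e1, e2, sub_zero] at h2
      simpa using h2
    have hdiagz : ∀ i : Fin N, x i i = 0 := by
      have hle : nilpart a b N ≤ diagZero N := by
        refine (nilpart_eq a b N).trans_le ?_
        apply Submodule.span_le.mpr
        rintro M ⟨p, q, h, rfl⟩
        show ∀ i : Fin N, Emat N p q i i = 0
        intro i
        exact Matrix.single_apply_of_ne (c := (1:ℂ))
          (h := fun hc => Rr_ne h (hc.1.trans hc.2.symm))
      exact fun i => hle hx1 i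
    rw [Submodule.mem_bot]
    ext i j
    by_cases h : i = j
    · subst h
      rw [hdiagz i]
      rfl
    · rw [hoffd i j h]
      rfl
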